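/- Every Banff quiver admits a reddening sequence. (Abstract version: suppose R is a class of quivers such that (a) every acyclic quiver is in R, (b) R is closed under mutation equivalence, (c) R is closed under passing to induced subquivers, and (d) R is closed under triangular extensions. Then every Banff quiver is in R.) -/

import Mathlib

/-- A quiver (finite directed multigraph without loops or 2-cycles), encoded as a
skew-symmetric integer matrix `B` on a finite vertex set: `B i j` is the number of
arrows `i → j` minus the number of arrows `j → i`. -/
structure Quiv where
  V : Type
  [fin : Fintype V]
  B : V → V → ℤ
  skew : ∀ i j, B i j = -(B j i)

attribute [instance] Quiv.fin

namespace Quiv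

lemma sign_mul_max (a b : ℤ) :
    a.sign * max (a * b) 0 = b.sign * max (b * a) 0 := by
  rcases lt_trichotomy (a * b) 0 with h | h | h
  · rw [max_eq_right h.le, mul_comm b a, max_eq_right h.le, mul_zero, mul_zero]
  · simp [h, mul_comm b a]
  · have h' : 0 < b * a := by rwa [mul_comm]
    rw [max_eq_left h.le, max_eq_left h'.le, mul_comm b a]
    rcases mul_pos_iff.mp h with ⟨ha, hb⟩ | ⟨ha, hb⟩
    · rw [Int.sign_eq_one_of_pos ha, Int.sign_eq_one_of_pos hb]
    · rw [Int.sign_eq_neg_one_of_neg ha, Int.sign_eq_neg_one_of_neg hb]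

open Classical in
/-- Quiver mutation at the vertex `i`. -/
noncomputable def mutate (Q : Quiv) (i : Q.V) : Quiv where
  V := Q.V
  fin := Q.fin
  B := fun j k =>
    if j = i ∨ k = i then -(Q.B j k)
    else Q.B j k + (Q.B j i).sign * max (Q.B j i * Q.B i k) 0
  skew := by
    intro j k
    try dsimp only
    by_cases h : j = i ∨ k = i
    · rw [if_pos h, if_pos (Or.symm h), Q.skew j k]
    · have h' : ¬(k = i ∨ j = i) := fun hc => h (Or.symm hc)
      rw [if_neg h, if_neg h', Q.skew k j, Q.skew k i, Q.skew i j]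
      have hm : (-(Q.B i k)) * (-(Q.B j i)) = Q.B i k * Q.B j i := by ring
      rw [hm, Int.sign_neg, sign_mul_max (Q.B j i) (Q.B i k)]
      ring

/-- `Arrow Q i j` means there is an arrow from `i` to `j`. -/
def Arrow (Q : Quiv) (i j : Q.V) : Prop := 0 < Q.B i j

/-- A quiver is acyclic if it has no directed cycles. -/
def Acyclic (Q : Quiv) : Prop := ∀ v, ¬ Relation.TransGen Q.Arrow v v

def IsSource (Q : Quiv) (i : Q.V) : Prop := ∀ j, ¬ Q.Arrow j i

def IsSink (Q : Quiv) (j : Q.V) : Prop := ∀ k, ¬ Q.Arrow j k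

/-- The induced subquiver on a subset `S` of the vertices. -/
noncomputable def restrict (Q : Quiv) (S : Set Q.V) : Quiv where
  V := S
  fin := Fintype.ofFinite S
  B := fun a b => Q.B a b
  skew := fun a b => Q.skew a b

/-- Deletion of the vertex `i` (induced subquiver on the complement). -/
noncomputable def delete (Q : Quiv) (i : Q.V) : Quiv := Q.restrict {v | v ≠ i}

/-- Iterated mutation along a list of vertices. -/
noncomputable def mutateSeq : (Q : Quiv) → List Q.V → Quiv
  | Q, [] => Q
  | Q, i :: l => mutateSeq (Q.mutate i) l
termination_by _ l => l.length
decreasing_by exact Nat.lt_succ_self _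

/-- Isomorphism (relabeling of vertices) of quivers. -/
def Iso (Q Q' : Quiv) : Prop :=
  ∃ e : Q.V ≃ Q'.V, ∀ a b, Q'.B (e a) (e b) = Q.B a b

/-- Mutation equivalence: `Q'` is obtained from `Q` by finitely many mutations,
up to relabeling of vertices. -/
def MutEquiv (Q Q' : Quiv) : Prop := ∃ l : List Q.V, Iso (Q.mutateSeq l) Q'

/-- `Q` is a triangular extension of `Q₁` and `Q₂`: `V(Q) = V(Q₁) ⊔ V(Q₂)`,
`Q₁` and `Q₂` are induced subquivers, and all remaining arrows go from
`V(Q₁)` to `V(Q₂)`. -/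
def IsTriExt (Q Q₁ Q₂ : Quiv) : Prop :=
  ∃ e : Q.V ≃ (Q₁.V ⊕ Q₂.V),
    (∀ a b : Q₁.V, Q.B (e.symm (Sum.inl a)) (e.symm (Sum.inl b)) = Q₁.B a b) ∧
    (∀ a b : Q₂.V, Q.B (e.symm (Sum.inr a)) (e.symm (Sum.inr b)) = Q₂.B a b) ∧
    (∀ (a : Q₁.V) (b : Q₂.V), 0 ≤ Q.B (e.symm (Sum.inl a)) (e.symm (Sum.inr b)))

/-- A covering pair: an arrow `i → j` which is not part of any bi-infinite path. -/
def CoveringPair (Q : Quiv) (i j : Q.V) : Prop :=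
  Q.Arrow i j ∧
    ¬ ∃ f : ℤ → Q.V, (∀ a : ℤ, Q.Arrow (f a) (f (a + 1))) ∧ ∃ a, f a = i ∧ f (a + 1) = j

end Quiv

/-- The class of Banff quivers: the smallest class of quivers containing all acyclic
quivers, closed under mutation equivalence, and containing any quiver `Q` with a
covering pair `(i, j)` such that both `Q ∖ {i}` and `Q ∖ {j}` are in the class. -/
inductive Banff : Quiv → Prop
  | acyclic (Q : Quiv) : Q.Acyclic → Banff Q
  | mutEquiv (Q Q' : Quiv) : Banff Q → Q.MutEquiv Q' → Banff Q'
  | cover (Q : Quiv) (i j : Q.V) : Q.CoveringPair i j →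
      Banff (Q.delete i) → Banff (Q.delete j) → Banff Q



namespace BanffAux

open Quiv

lemma mutateSeq_nil (Q : Quiv) : Q.mutateSeq [] = Q := by rw [Quiv.mutateSeq]

lemma mutEquiv_of_iso {Q Q' : Quiv} (h : Quiv.Iso Q Q') : Q.MutEquiv Q' :=
  ⟨[], (mutateSeq_nil Q).symm ▸ h⟩

/-- Restricting a restriction is isomorphic to a single restriction. -/
lemma restrict_restrict_iso (Q : Quiv) (T S : Set Q.V) (hST : S ⊆ T) :
    Quiv.Iso ((Q.restrict T).restrict (Subtype.val ⁻¹' S)) (Q.restrict S) := by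
  refine ⟨⟨fun x => ⟨x.1.1, x.2⟩, fun v => ⟨⟨v.1, hST v.2⟩, v.2⟩, ?_, ?_⟩, ?_⟩
  · intro x; rfl
  · intro v; rfl
  · intro a b; rfl

lemma exists_path (Q : Quiv) {j i : Q.V} (h : Relation.ReflTransGen Q.Arrow j i) :
    ∃ n, ∃ g : ℕ → Q.V, g 0 = j ∧ g n = i ∧ ∀ k < n, Q.Arrow (g k) (g (k + 1)) := by
  induction h with
  | refl => exact ⟨0, fun _ => j, rfl, rfl, fun k hk => absurd hk (Nat.not_lt_zero k)⟩
  | @tail b c hjb hbc ih =>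
    obtain ⟨n, g, hg0, hgn, hgar⟩ := ih
    refine ⟨n + 1, fun k => if k ≤ n then g k else c, by simp [hg0], by simp, ?_⟩
    intro k hk
    rcases (by omega : k < n ∨ k = n) with hkn | rfl
    · simp only [if_pos (by omega : k ≤ n), if_pos (by omega : k + 1 ≤ n)]
      exact hgar k hkn
    · simp only [if_pos (le_refl k), if_neg (by omega : ¬ k + 1 ≤ k)]
      rw [hgn]; exact hbc

lemma not_reach (Q : Quiv) {i j : Q.V} (hc : Q.CoveringPair i j) :
    ¬ Relation.ReflTransGen Q.Arrow j i := by
  obtain ⟨harr, hno⟩ := hc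
  have hBii : Q.B i i = 0 := by have := Q.skew i i; omega
  have hij : i ≠ j := by
    rintro rfl
    exact absurd harr (by simp [Quiv.Arrow, hBii])
  intro h
  obtain ⟨n, g, hg0, hgn, hgar⟩ := exists_path Q h
  have hn : n ≠ 0 := by rintro rfl; exact hij (hgn.symm.trans hg0)
  obtain ⟨h', hh'⟩ : ∃ h' : ℕ → Q.V, ∀ k, h' k = if k = 0 then i else g (k - 1) :=
    ⟨_, fun _ => rfl⟩
  have h'0 : h' 0 = i := by rw [hh', if_pos rfl]
  have h'1 : h' 1 = j := by rw [hh']; simpa using hg0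
  have h'top : h' (n + 1) = i := by
    rw [hh', if_neg (by omega : ¬ n + 1 = 0), (by omega : n + 1 - 1 = n)]; exact hgn
  have h'arr : ∀ k < n + 1, Q.Arrow (h' k) (h' (k + 1)) := by
    intro k hk
    rcases Nat.eq_zero_or_pos k with rfl | hk0
    · rw [h'0, h'1]; exact harr
    · rw [hh' k, hh' (k+1), if_neg (by omega : ¬ k = 0), if_neg (by omega : ¬ k + 1 = 0),
        (by omega : k + 1 - 1 = k)]
      have := hgar (k - 1) (by omega)
      rwa [(by omega : k - 1 + 1 = k)] at this
  set N : ℤ := (n : ℤ) + 1 with hNdef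
  have hN2 : 2 ≤ N := by omega
  have hmod : ∀ a : ℤ, 0 ≤ a % N ∧ a % N < N := fun a =>
    ⟨Int.emod_nonneg a (by omega), Int.emod_lt_of_pos a (by omega)⟩
  have h1N : (1 : ℤ) % N = 1 := Int.emod_eq_of_lt (by norm_num) (by omega)
  refine hno ⟨fun a => h' (a % N).toNat, ?_, 0, ?_, ?_⟩
  · intro a
    obtain ⟨hr0, hrN⟩ := hmod a
    set r : ℕ := (a % N).toNat with hr
    have hrv : (a % N) = (r : ℤ) := (Int.toNat_of_nonneg hr0).symm
    have hrlt : r < n + 1 := by omega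
    have hsucc : (a + 1) % N = ((r : ℤ) + 1) % N := by
      rw [Int.add_emod, hrv, h1N]
    by_cases hcase : r + 1 < n + 1
    · have heq : (a + 1) % N = (r : ℤ) + 1 := by
        rw [hsucc]; exact Int.emod_eq_of_lt (by omega) (by omega)
      have ht : ((a + 1) % N).toNat = r + 1 := by omega
      show Q.Arrow (h' r) (h' ((a + 1) % N).toNat)
      rw [ht]
      exact h'arr r (by omega)
    · have hrn : r = n := by omega
      have heq : (a + 1) % N = 0 := by
        rw [hsucc, hrn, (by ring : ((n : ℕ) : ℤ) + 1 = N)]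
        exact Int.emod_self
      have ht : ((a + 1) % N).toNat = 0 := by omega
      show Q.Arrow (h' r) (h' ((a + 1) % N).toNat)
      rw [ht, hrn, h'0, ← h'top]
      exact h'arr n (by omega)
  · show h' ((0 % N).toNat) = i
    rw [Int.zero_emod]; exact h'0
  · show h' (((0 : ℤ) + 1) % N).toNat = j
    rw [zero_add, h1N]; exact h'1

end BanffAux
/-- Every Banff quiver admits a reddening sequence (abstract version): if a class
`R` of quivers contains all acyclic quivers, is closed under mutation equivalence,
is closed under passing to induced subquivers, and is closed under triangular
extensions, then every Banff quiver is in `R`. -/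
theorem banff_in_reddening_class
    (R : Quiv → Prop)
    (hAcyclic : ∀ Q : Quiv, Q.Acyclic → R Q)
    (hMutEquiv : ∀ Q Q' : Quiv, R Q → Q.MutEquiv Q' → R Q')
    (hInduced : ∀ (Q : Quiv) (S : Set Q.V), R Q → R (Q.restrict S))
    (hTri : ∀ Q Q₁ Q₂ : Quiv, Q.IsTriExt Q₁ Q₂ → R Q₁ → R Q₂ → R Q) :
    ∀ Q : Quiv, Banff Q → R Q := by
  intro Q hB
  induction hB with
  | acyclic Q h => exact hAcyclic Q h
  | mutEquiv Q Q' hQ hme ih => exact hMutEquiv Q Q' ih hme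
  | cover Q i j hcp hd1 hd2 ihi ihj =>
    classical
    set Bset : Set Q.V := {v | Relation.ReflTransGen Q.Arrow j v} with hBsetdef
    set Aset : Set Q.V := {v | v ∉ Bset} with hAsetdef
    have hjB : j ∈ Bset := Relation.ReflTransGen.refl
    have hiA : i ∈ Aset := BanffAux.not_reach Q hcp
    have hAj : Aset ⊆ {v | v ≠ j} := by
      intro a ha hja
      exact ha (hja ▸ hjB)
    have hBi : Bset ⊆ {v | v ≠ i} := by
      intro b hb hbi
      exact hiA (hbi ▸ hb)
    have hRA : R (Q.restrict Aset) :=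
      hMutEquiv _ _ (hInduced (Q.delete j) (Subtype.val ⁻¹' Aset) ihj)
        (BanffAux.mutEquiv_of_iso (BanffAux.restrict_restrict_iso Q {v | v ≠ j} Aset hAj))
    have hRB : R (Q.restrict Bset) :=
      hMutEquiv _ _ (hInduced (Q.delete i) (Subtype.val ⁻¹' Bset) ihi)
        (BanffAux.mutEquiv_of_iso (BanffAux.restrict_restrict_iso Q {v | v ≠ i} Bset hBi))
    refine hTri Q (Q.restrict Aset) (Q.restrict Bset) ?_ hRA hRB
    refine ⟨⟨fun v => if h : v ∈ Bset then Sum.inr ⟨v, h⟩ else Sum.inl ⟨v, h⟩,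
      Sum.elim (fun a => a.1) (fun b => b.1), ?_, ?_⟩, ?_, ?_, ?_⟩
    · intro v; by_cases h : v ∈ Bset <;> simp [h] <;> rfl
    · rintro (a | b)
      · simp only [Sum.elim_inl]; refine (dif_neg a.2).trans ?_
        exact congrArg Sum.inl (Subtype.ext rfl)
      · simp only [Sum.elim_inr]; refine (dif_pos b.2).trans ?_
        exact congrArg Sum.inr (Subtype.ext rfl)
    · intro a b; rfl
    · intro a b; rfl
    · intro a b
      show (0 : ℤ) ≤ Q.B (Subtype.val a) (Subtype.val b)
      by_contra hneg
      push_neg at hneg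
      have harr : Q.Arrow (Subtype.val b) (Subtype.val a) := by
        have := Q.skew (Subtype.val a) (Subtype.val b)
        unfold Quiv.Arrow
        omega
      exact a.2 (Relation.ReflTransGen.tail b.2 harr)
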